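/- Let ρ be a real random variable distributed according to the mixture p·N(m₁, w) + (1−p)·N(m₂, w), with 0 < p < 1, w ≥ 0, α = p(1−p), and δ = m₁ − m₂, and assume σ² = α·δ² + w > 0. Then the kurtosis of ρ satisfies κ(ρ) = 3 + α(1−6α)·δ⁴ / (α·δ² + w)². -/

import Mathlib

open MeasureTheory ProbabilityTheory Real Set
open scoped ENNReal NNReal

namespace GaussKurtAux

lemma integrable_pow_mul_exp_neg_mul_sq {b : ℝ} (hb : 0 < b) (k : ℕ) :
    Integrable fun x : ℝ => x ^ k * rexp (-b * x ^ 2) := by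
  have hk : (-1 : ℝ) < (k : ℝ) := lt_of_lt_of_le (by norm_num) (Nat.cast_nonneg k)
  have hIoi : IntegrableOn (fun x : ℝ => x ^ k * rexp (-b * x ^ 2)) (Ioi 0) := by
    refine (integrableOn_rpow_mul_exp_neg_mul_sq hb hk).congr_fun ?_ measurableSet_Ioi
    intro x hx
    simp [Real.rpow_natCast]
  rw [← integrableOn_univ, ← Set.Iio_union_Ici (a := (0:ℝ)), integrableOn_union,
    integrableOn_Ici_iff_integrableOn_Ioi]
  refine ⟨?_, hIoi⟩
  rw [← (Measure.measurePreserving_neg (volume : Measure ℝ)).integrableOn_comp_preimage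
      (Homeomorph.neg ℝ).measurableEmbedding]
  simp only [Function.comp_def, neg_preimage, neg_Iio, neg_zero]
  have heq : ∀ x : ℝ, (-x) ^ k * rexp (-b * (-x) ^ 2)
      = ((-1 : ℝ) ^ k) * (x ^ k * rexp (-b * x ^ 2)) := by
    intro x
    rw [neg_pow, neg_sq]
    ring
  have h2 : IntegrableOn (fun x : ℝ => ((-1 : ℝ) ^ k) * (x ^ k * rexp (-b * x ^ 2))) (Ioi 0) :=
    hIoi.const_mul _
  exact h2.congr_fun (fun x _ => (heq x).symm) measurableSet_Ioi

lemma integral_pow_succ_succ_mul_exp {b : ℝ} (hb : 0 < b) (k : ℕ) :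
    ∫ x : ℝ, x ^ (k + 2) * rexp (-b * x ^ 2)
      = ((k + 1 : ℝ) / (2 * b)) * ∫ x : ℝ, x ^ k * rexp (-b * x ^ 2) := by
  set f : ℝ → ℝ := fun x => x ^ (k + 1) * rexp (-b * x ^ 2) with hf_def
  set f' : ℝ → ℝ := fun x =>
    (k + 1 : ℝ) * (x ^ k * rexp (-b * x ^ 2)) - (2 * b) * (x ^ (k + 2) * rexp (-b * x ^ 2))
    with hf'_def
  have hderiv : ∀ x : ℝ, HasDerivAt f (f' x) x := by
    intro x
    have h1 : HasDerivAt (fun x : ℝ => x ^ (k + 1)) ((k + 1 : ℝ) * x ^ k) x := by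
      simpa using hasDerivAt_pow (k + 1) x
    have h2 : HasDerivAt (fun x : ℝ => rexp (-b * x ^ 2))
        (rexp (-b * x ^ 2) * (-b * (2 * x ^ 1))) x :=
      ((hasDerivAt_pow 2 x).const_mul (-b)).exp
    have : HasDerivAt f _ x := h1.mul h2
    convert this using 1
    simp only [hf'_def]
    ring
  have hint : ∀ m : ℕ, Integrable fun x : ℝ => x ^ m * rexp (-b * x ^ 2) :=
    fun m => integrable_pow_mul_exp_neg_mul_sq hb m
  have hf'int : Integrable f' :=
    (((hint k).const_mul _).sub ((hint (k + 2)).const_mul _))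
  have hfint : Integrable f := hint (k + 1)
  have h0 : ∫ x, f' x = 0 :=
    integral_eq_zero_of_hasDerivAt_of_integrable hderiv hf'int hfint
  rw [hf'_def] at h0
  rw [integral_sub ((hint k).const_mul _) ((hint (k + 2)).const_mul _),
    integral_const_mul, integral_const_mul] at h0
  have hb' : (2 * b) ≠ 0 := by positivity
  simp only [neg_mul] at h0 ⊢
  field_simp
  linarith [h0]

lemma integral_pow_mul_exp_odd {b : ℝ} {k : ℕ} (hk : Odd k) :
    ∫ x : ℝ, x ^ k * rexp (-b * x ^ 2) = 0 := by
  have h := integral_neg_eq_self (fun x : ℝ => x ^ k * rexp (-b * x ^ 2))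
    (volume : Measure ℝ)
  have h2 : ∀ x : ℝ, (-x) ^ k * rexp (-b * (-x) ^ 2) = -(x ^ k * rexp (-b * x ^ 2)) := by
    intro x
    rw [hk.neg_pow, neg_sq]
    ring
  simp only [h2, integral_neg] at h
  linarith

lemma integral_exp_sq (b : ℝ) : ∫ x : ℝ, rexp (-b * x ^ 2) = Real.sqrt (π / b) :=
  integral_gaussian b

lemma integral_sq_mul_exp {b : ℝ} (hb : 0 < b) :
    ∫ x : ℝ, x ^ 2 * rexp (-b * x ^ 2) = Real.sqrt (π / b) / (2 * b) := by
  have h := integral_pow_succ_succ_mul_exp hb 0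
  simp only [pow_zero, one_mul, zero_add] at h
  rw [h, integral_exp_sq]
  ring

lemma integral_pow4_mul_exp {b : ℝ} (hb : 0 < b) :
    ∫ x : ℝ, x ^ 4 * rexp (-b * x ^ 2) = 3 * Real.sqrt (π / b) / (4 * b ^ 2) := by
  have h := integral_pow_succ_succ_mul_exp hb 2
  rw [show (4:ℕ) = 2 + 2 from rfl, h, integral_sq_mul_exp hb]
  push_cast
  field_simp
  ring

lemma integral_gaussianReal_eq (m c : ℝ) {v : ℝ≥0} (hv : v ≠ 0) (n : ℕ) :
    ∫ x, (x - c) ^ n ∂(gaussianReal m v)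
      = ∫ y, (Real.sqrt (2 * π * v))⁻¹
          * ((y + (m - c)) ^ n * rexp (-(2 * (v : ℝ))⁻¹ * y ^ 2)) := by
  rw [gaussianReal_of_var_ne_zero _ hv]
  have hmeas : Measurable fun x => (gaussianPDFReal m v x).toNNReal :=
    (measurable_gaussianPDFReal m v).real_toNNReal
  rw [show gaussianPDF m v = fun x => ((gaussianPDFReal m v x).toNNReal : ℝ≥0∞) from rfl,
    integral_withDensity_eq_integral_smul hmeas]
  rw [← integral_sub_right_eq_self (fun y => (Real.sqrt (2 * π * v))⁻¹
      * ((y + (m - c)) ^ n * rexp (-(2 * (v : ℝ))⁻¹ * y ^ 2))) m]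
  congr 1
  ext x
  rw [NNReal.smul_def, Real.coe_toNNReal _ (gaussianPDFReal_nonneg _ _ _), smul_eq_mul]
  unfold gaussianPDFReal
  rw [show x - m + (m - c) = x - c by ring,
    show -(2 * (v : ℝ))⁻¹ * (x - m) ^ 2 = -(x - m) ^ 2 / (2 * (v : ℝ)) by ring]
  ring

lemma gaussianReal_central_two (m c : ℝ) (v : ℝ≥0) :
    ∫ x, (x - c) ^ 2 ∂(gaussianReal m v) = (m - c) ^ 2 + (v : ℝ) := by
  by_cases hv : v = 0
  · subst hv
    simp only [gaussianReal_zero_var, NNReal.coe_zero, add_zero]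
    rw [integral_dirac]
  · have hvpos : 0 < (v : ℝ) := NNReal.coe_pos.mpr (pos_iff_ne_zero.mpr hv)
    set d := m - c with hd_def
    set b : ℝ := (2 * (v : ℝ))⁻¹ with hb_def
    have hb : 0 < b := by rw [hb_def]; positivity
    set K : ℝ := (Real.sqrt (2 * π * v))⁻¹ with hK_def
    have hKpos : 0 < Real.sqrt (2 * π * (v : ℝ)) := Real.sqrt_pos.mpr (by positivity)
    rw [integral_gaussianReal_eq m c hv 2]
    have hint := fun k => integrable_pow_mul_exp_neg_mul_sq hb k
    have hexpand : (fun y : ℝ => K * ((y + d) ^ 2 * rexp (-b * y ^ 2)))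
        = fun y => K * (y ^ 2 * rexp (-b * y ^ 2)) + (2 * d * K) * (y ^ 1 * rexp (-b * y ^ 2))
            + (d ^ 2 * K) * rexp (-b * y ^ 2) := by
      ext y; ring
    have hA : Integrable (fun y : ℝ => K * (y ^ 2 * rexp (-b * y ^ 2))
        + 2 * d * K * (y ^ 1 * rexp (-b * y ^ 2))) volume :=
      ((hint 2).const_mul K).add ((hint 1).const_mul _)
    rw [hexpand, integral_add hA ((integrable_exp_neg_mul_sq hb).const_mul _),
      integral_add ((hint 2).const_mul K) ((hint 1).const_mul _),
      integral_const_mul, integral_const_mul, integral_const_mul,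
      integral_sq_mul_exp hb, integral_pow_mul_exp_odd odd_one, integral_exp_sq]
    have hS : Real.sqrt (π / b) = Real.sqrt (2 * π * (v : ℝ)) := by
      congr 1; rw [hb_def]; field_simp
    have hKS : K * Real.sqrt (2 * π * (v : ℝ)) = 1 := inv_mul_cancel₀ hKpos.ne'
    have h2b : (2 * b)⁻¹ = (v : ℝ) := by rw [hb_def]; field_simp
    rw [hS]
    linear_combination (2 * b)⁻¹ * hKS + d ^ 2 * hKS + h2b

lemma gaussianReal_central_four (m c : ℝ) (v : ℝ≥0) :
    ∫ x, (x - c) ^ 4 ∂(gaussianReal m v)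
      = (m - c) ^ 4 + 6 * (m - c) ^ 2 * (v : ℝ) + 3 * (v : ℝ) ^ 2 := by
  by_cases hv : v = 0
  · subst hv
    simp only [gaussianReal_zero_var, NNReal.coe_zero, mul_zero, add_zero, zero_pow,
      ne_eq, OfNat.ofNat_ne_zero, not_false_eq_true]
    rw [integral_dirac]
  · have hvpos : 0 < (v : ℝ) := NNReal.coe_pos.mpr (pos_iff_ne_zero.mpr hv)
    set d := m - c with hd_def
    set b : ℝ := (2 * (v : ℝ))⁻¹ with hb_def
    have hb : 0 < b := by rw [hb_def]; positivity
    set K : ℝ := (Real.sqrt (2 * π * v))⁻¹ with hK_def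
    have hKpos : 0 < Real.sqrt (2 * π * (v : ℝ)) := Real.sqrt_pos.mpr (by positivity)
    rw [integral_gaussianReal_eq m c hv 4]
    have hint := fun k => integrable_pow_mul_exp_neg_mul_sq hb k
    have hexpand : (fun y : ℝ => K * ((y + d) ^ 4 * rexp (-b * y ^ 2)))
        = fun y => K * (y ^ 4 * rexp (-b * y ^ 2)) + (4 * d * K) * (y ^ 3 * rexp (-b * y ^ 2))
            + (6 * d ^ 2 * K) * (y ^ 2 * rexp (-b * y ^ 2))
            + (4 * d ^ 3 * K) * (y ^ 1 * rexp (-b * y ^ 2))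
            + (d ^ 4 * K) * rexp (-b * y ^ 2) := by
      ext y; ring
    have hA2 : Integrable (fun y : ℝ => K * (y ^ 4 * rexp (-b * y ^ 2))
        + 4 * d * K * (y ^ 3 * rexp (-b * y ^ 2))) volume :=
      ((hint 4).const_mul K).add ((hint 3).const_mul _)
    have hA3 : Integrable (fun y : ℝ => K * (y ^ 4 * rexp (-b * y ^ 2))
        + 4 * d * K * (y ^ 3 * rexp (-b * y ^ 2))
        + 6 * d ^ 2 * K * (y ^ 2 * rexp (-b * y ^ 2))) volume :=
      hA2.add ((hint 2).const_mul _)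
    have hA4 : Integrable (fun y : ℝ => K * (y ^ 4 * rexp (-b * y ^ 2))
        + 4 * d * K * (y ^ 3 * rexp (-b * y ^ 2))
        + 6 * d ^ 2 * K * (y ^ 2 * rexp (-b * y ^ 2))
        + 4 * d ^ 3 * K * (y ^ 1 * rexp (-b * y ^ 2))) volume :=
      hA3.add ((hint 1).const_mul _)
    rw [hexpand,
      integral_add hA4 ((integrable_exp_neg_mul_sq hb).const_mul _),
      integral_add hA3 ((hint 1).const_mul _),
      integral_add hA2 ((hint 2).const_mul _),
      integral_add ((hint 4).const_mul K) ((hint 3).const_mul _),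
      integral_const_mul, integral_const_mul, integral_const_mul, integral_const_mul,
      integral_const_mul, integral_pow4_mul_exp hb, integral_sq_mul_exp hb,
      integral_pow_mul_exp_odd (⟨1, by norm_num⟩ : Odd 3), integral_pow_mul_exp_odd odd_one,
      integral_exp_sq]
    have hS : Real.sqrt (π / b) = Real.sqrt (2 * π * (v : ℝ)) := by
      congr 1; rw [hb_def]; field_simp
    have hKS : K * Real.sqrt (2 * π * (v : ℝ)) = 1 := inv_mul_cancel₀ hKpos.ne'
    have h2b : (2 * b)⁻¹ = (v : ℝ) := by rw [hb_def]; field_simp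
    have h4b : (4 * b ^ 2)⁻¹ = (v : ℝ) ^ 2 := by
      rw [hb_def]; field_simp; ring
    rw [hS]
    linear_combination (3 * (4 * b ^ 2)⁻¹) * hKS + 3 * h4b
      + (6 * d ^ 2 * (2 * b)⁻¹) * hKS + 6 * d ^ 2 * h2b + d ^ 4 * hKS

lemma integrable_poly_mul_gauss {b : ℝ} (hb : 0 < b) (d : ℝ) (n : ℕ) :
    Integrable fun y : ℝ => (y + d) ^ n * rexp (-b * y ^ 2) := by
  have : (fun y : ℝ => (y + d) ^ n * rexp (-b * y ^ 2))
      = fun y => ∑ k ∈ Finset.range (n + 1),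
          (d ^ (n - k) * (n.choose k : ℝ)) * (y ^ k * rexp (-b * y ^ 2)) := by
    ext y
    rw [add_pow, Finset.sum_mul]
    congr 1
    ext k
    ring
  rw [this]
  exact integrable_finset_sum _
    (fun k _ => (integrable_pow_mul_exp_neg_mul_sq hb k).const_mul _)

lemma integrable_pow_sub_gaussianReal (m c : ℝ) (v : ℝ≥0) (n : ℕ) :
    Integrable (fun x => (x - c) ^ n) (gaussianReal m v) := by
  by_cases hv : v = 0
  · subst hv
    rw [gaussianReal_zero_var]
    refine ⟨((measurable_id.sub_const c).pow_const n).aestronglyMeasurable, ?_⟩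
    rw [HasFiniteIntegral, lintegral_dirac' _ (by measurability)]
    exact ENNReal.coe_lt_top
  · have hvpos : 0 < (v : ℝ) := NNReal.coe_pos.mpr (pos_iff_ne_zero.mpr hv)
    have hb : 0 < (2 * (v : ℝ))⁻¹ := by positivity
    have hmeas : Measurable fun x => (gaussianPDFReal m v x).toNNReal :=
      (measurable_gaussianPDFReal m v).real_toNNReal
    rw [gaussianReal_of_var_ne_zero _ hv,
      show gaussianPDF m v = fun x => ((gaussianPDFReal m v x).toNNReal : ℝ≥0∞) from rfl,
      integrable_withDensity_iff_integrable_smul hmeas]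
    have h1 : Integrable fun y : ℝ => (Real.sqrt (2 * π * v))⁻¹
        * ((y + (m - c)) ^ n * rexp (-(2 * (v : ℝ))⁻¹ * y ^ 2)) :=
      (integrable_poly_mul_gauss hb (m - c) n).const_mul _
    refine (h1.comp_sub_right m).congr (ae_of_all _ fun x => ?_)
    simp only [NNReal.smul_def, smul_eq_mul, Real.coe_toNNReal _ (gaussianPDFReal_nonneg _ _ _)]
    unfold gaussianPDFReal
    rw [show x - m + (m - c) = x - c by ring,
      show -(2 * (v : ℝ))⁻¹ * (x - m) ^ 2 = -(x - m) ^ 2 / (2 * (v : ℝ)) by ring]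
    ring

end GaussKurtAux


open MeasureTheory ProbabilityTheory

/-- For `ρ` distributed as the two-component Gaussian mixture
`p·N(m₁, w) + (1−p)·N(m₂, w)` with `0 < p < 1`, `α = p(1−p)`, `δ = m₁ − m₂`, and
variance `σ² = α·δ² + w > 0`, the kurtosis satisfies
`κ(ρ) = m₄/σ⁴ = 3 + α(1−6α)·δ⁴/(α·δ² + w)²`. -/
theorem gaussian_mixture_kurtosis
    (p : ℝ) (hp0 : 0 < p) (hp1 : p < 1) (m₁ m₂ : ℝ) (w : NNReal)
    (ν : Measure ℝ)
    (hν : ν = ENNReal.ofReal p • gaussianReal m₁ w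
        + ENNReal.ofReal (1 - p) • gaussianReal m₂ w)
    (μmean α δ : ℝ) (hμ : μmean = p * m₁ + (1 - p) * m₂)
    (hα : α = p * (1 - p)) (hδ : δ = m₁ - m₂)
    (hσpos : 0 < α * δ ^ 2 + (w : ℝ)) :
    (∫ x, (x - μmean) ^ 4 ∂ν) / (∫ x, (x - μmean) ^ 2 ∂ν) ^ 2
      = 3 + α * (1 - 6 * α) * δ ^ 4 / (α * δ ^ 2 + (w : ℝ)) ^ 2 := by
  have hq0 : 0 < 1 - p := by linarith
  have hne1 : ENNReal.ofReal p ≠ 0 := (ENNReal.ofReal_pos.mpr hp0).ne'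
  have hne2 : ENNReal.ofReal (1 - p) ≠ 0 := (ENNReal.ofReal_pos.mpr hq0).ne'
  have hmoment : ∀ n : ℕ, ∫ x, (x - μmean) ^ n ∂ν
      = p * ∫ x, (x - μmean) ^ n ∂(gaussianReal m₁ w)
        + (1 - p) * ∫ x, (x - μmean) ^ n ∂(gaussianReal m₂ w) := by
    intro n
    rw [hν, integral_add_measure
        ((integrable_smul_measure hne1 ENNReal.ofReal_ne_top).mpr
          (GaussKurtAux.integrable_pow_sub_gaussianReal m₁ μmean w n))
        ((integrable_smul_measure hne2 ENNReal.ofReal_ne_top).mpr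
          (GaussKurtAux.integrable_pow_sub_gaussianReal m₂ μmean w n)),
      integral_smul_measure, integral_smul_measure,
      ENNReal.toReal_ofReal hp0.le, ENNReal.toReal_ofReal hq0.le, smul_eq_mul, smul_eq_mul]
  have hd1 : m₁ - μmean = (1 - p) * δ := by rw [hμ, hδ]; ring
  have hd2 : m₂ - μmean = -(p * δ) := by rw [hμ, hδ]; ring
  have hE2 : ∫ x, (x - μmean) ^ 2 ∂ν = α * δ ^ 2 + (w : ℝ) := by
    rw [hmoment 2, GaussKurtAux.gaussianReal_central_two,
      GaussKurtAux.gaussianReal_central_two, hd1, hd2, hα]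
    ring
  have hE4 : ∫ x, (x - μmean) ^ 4 ∂ν
      = 3 * (α * δ ^ 2 + (w : ℝ)) ^ 2 + α * (1 - 6 * α) * δ ^ 4 := by
    rw [hmoment 4, GaussKurtAux.gaussianReal_central_four,
      GaussKurtAux.gaussianReal_central_four, hd1, hd2, hα]
    ring
  rw [hE2, hE4]
  have hne : α * δ ^ 2 + (w : ℝ) ≠ 0 := hσpos.ne'
  field_simp
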